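/- Let X be a type with decidable equality equipped with a linear order, and let A be a unital algebra over ℂ. Suppose γ : X → A and s : X → A satisfy the relations R': (R'₁) s x * s x = 1 and s x * s x' = s x' * s x for all x, x'; (R'₂) γ x * γ x' + γ x' * γ x = 2·1 if x = x' and = 0 if x ≠ x'; (R'₃) s x * γ x' * s x = −γ x' if x = x' and = γ x' if x ≠ x'. Define ξ x = Complex.I • (γ x * s x); for a finset J of X let Ξ_J denote the product of the ξ x for x ∈ J taken in increasing order, and S_J the product of the s x for x ∈ J. Then for all finsets J, J' of X: Ξ_J * S_{J'} = (−1)^{|J ∩ J'|} • (S_{J'} * Ξ_J). -/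

import Mathlib

/-- The ordered product of `f x` over `x ∈ J`, taken in increasing order. -/
def ordProd {X : Type*} [LinearOrder X] {A : Type*} [Monoid A]
    (f : X → A) (J : Finset X) : A :=
  ((J.sort (· ≤ ·)).map f).prod

theorem stmt_14 {X : Type*} [DecidableEq X] [LinearOrder X] {A : Type*} [Ring A]
    [Algebra ℂ A]
    (γ s : X → A)
    (hR1a : ∀ x : X, s x * s x = 1)
    (hR1b : ∀ x x' : X, s x * s x' = s x' * s x)
    (hR2 : ∀ x x' : X, γ x * γ x' + γ x' * γ x = if x = x' then (2 : A) * 1 else 0)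
    (hR3 : ∀ x x' : X, s x * γ x' * s x = if x = x' then -γ x' else γ x')
    (ξ : X → A)
    (hξ : ∀ x : X, ξ x = Complex.I • (γ x * s x))
    (J J' : Finset X) :
    ordProd ξ J * ordProd s J' =
      ((-1 : ℤ) ^ (J ∩ J').card) • (ordProd s J' * ordProd ξ J) := by
  have hsy : ∀ x y : X, s y * γ x = (if x = y then -γ x else γ x) * s y := by
    intro x y
    have h2 : s y * γ x * s y * s y = s y * γ x := by
      rw [mul_assoc, hR1a, mul_one]
    rw [hR3 y x] at h2
    rw [← h2]
    by_cases h : x = y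
    · simp [h]
    · simp [h, Ne.symm h]
  have hxs : ∀ x y : X, ξ x * s y = (if x = y then (-1:ℤ) else 1) • (s y * ξ x) := by
    intro x y
    have hL : s y * ξ x = (if x = y then (-1:ℤ) else 1) • (ξ x * s y) := by
      rw [hξ, mul_smul_comm, smul_mul_assoc, ← mul_assoc, hsy x y]
      by_cases h : x = y
      · subst h
        simp [mul_assoc, hR1a]
      · simp [h, mul_assoc, hR1b y x]
    rw [hL]
    by_cases h : x = y <;> simp [h]
  -- commute one ξ x through a list of s's
  have hxM : ∀ (x : X) (M : List X),
      ξ x * (M.map s).prod = ((-1:ℤ) ^ M.count x) • ((M.map s).prod * ξ x) := by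
    intro x M
    induction M with
    | nil => simp
    | cons y M ih =>
      simp only [List.map_cons, List.prod_cons, List.count_cons]
      rw [← mul_assoc, hxs x y, smul_mul_assoc, mul_assoc, ih, mul_smul_comm,
        smul_smul, ← mul_assoc]
      by_cases h : x = y
      · simp [h, pow_succ, mul_comm]
      · simp [h, Ne.symm h]
  have hxS : ∀ x : X, ξ x * ordProd s J' =
      ((-1:ℤ) ^ (if x ∈ J' then 1 else 0)) • (ordProd s J' * ξ x) := by
    intro x
    have hc : (J'.sort (· ≤ ·)).count x = if x ∈ J' then 1 else 0 := by
      by_cases h : x ∈ J'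
      · simp [h, List.count_eq_one_of_mem (J'.sort_nodup _)
          ((Finset.mem_sort _).mpr h)]
      · simp [h, List.count_eq_zero_of_not_mem
          (fun hm => h ((Finset.mem_sort _).mp hm))]
    simpa [ordProd, hc] using hxM x (J'.sort (· ≤ ·))
  -- commute a list of ξ's through ordProd s J'
  have hmain : ∀ L : List X,
      (L.map ξ).prod * ordProd s J' =
        ((-1:ℤ) ^ (L.countP (fun x => decide (x ∈ J')))) •
          (ordProd s J' * (L.map ξ).prod) := by
    intro L
    induction L with
    | nil => simp
    | cons x L ih =>
      simp only [List.map_cons, List.prod_cons, List.countP_cons]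
      rw [mul_assoc, ih, mul_smul_comm, ← mul_assoc, hxS x, smul_mul_assoc,
        smul_smul, mul_assoc]
      by_cases h : x ∈ J' <;> simp [h, pow_succ, mul_comm, pow_add]
  have hcount : ((J.sort (· ≤ ·)).countP (fun x => decide (x ∈ J'))) = (J ∩ J').card := by
    have hperm := Finset.sort_perm_toList J (· ≤ ·)
    rw [hperm.countP_eq]
    rw [← Finset.filter_mem_eq_inter]
    simp only [Finset.toList, Finset.card_filter, Finset.filter]
    rw [← Multiset.coe_countP, Multiset.coe_toList, Multiset.countP_eq_card_filter]
    rfl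
  have := hmain (J.sort (· ≤ ·))
  rw [hcount] at this
  simpa [ordProd] using this
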